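/- Under the inter-cluster common influence assumption, the graph G contains cluster spanning trees with respect to the clustering C (i.e., for each cluster C_i there is a node of G reaching all nodes of C_i via directed paths in G) if and only if the minimum number of directed trees in a directed spanning forest of G equals the minimum number of directed trees in a directed spanning forest of the quotient graph 𝔾. -/

import Mathlib

open Relation Finset

section Aux

variable {V : Type*} [Fintype V] {adj : V → V → Prop}

/-- From a forest encoding, extract a covering family of roots. -/
lemma enc_to_cover {k : ℕ} (f : V → Fin k)
    (hf : ∀ t, ∃ r, f r = t ∧ ∀ v, f v = t →
      ReflTransGen (fun a b => f a = t ∧ f b = t ∧ adj a b) r v) :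
    ∃ r : Fin k → V, ∀ v, ∃ t, ReflTransGen adj (r t) v := by
  choose r _ hr2 using hf
  exact ⟨r, fun v => ⟨f v, ReflTransGen.mono (fun a b hab => hab.2.2) _ _ (hr2 (f v) v rfl)⟩⟩

/-- From a covering family of roots, build a forest encoding with possibly fewer trees. -/
lemma cover_to_enc {k : ℕ} (r : Fin k → V)
    (hr : ∀ v, ∃ t, ReflTransGen adj (r t) v) :
    ∃ k' ≤ k, ∃ f : V → Fin k', ∀ t, ∃ rt, f rt = t ∧ ∀ v, f v = t →
      ReflTransGen (fun a b => f a = t ∧ f b = t ∧ adj a b) rt v := by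
  classical
  have hspec : ∀ v : V, ∃ t, ReflTransGen adj (r t) v ∧
      ∀ t', ReflTransGen adj (r t') v → t ≤ t' := by
    intro v
    obtain ⟨t0, ht0⟩ := hr v
    obtain ⟨t, ht, hmin⟩ := (univ.filter fun t => ReflTransGen adj (r t) v).exists_min_image
      id ⟨t0, mem_filter.mpr ⟨mem_univ _, ht0⟩⟩
    exact ⟨t, (mem_filter.mp ht).2, fun t' h' => hmin t' (mem_filter.mpr ⟨mem_univ _, h'⟩)⟩
  choose g hg1 hg2 using hspec
  have geq : ∀ v w, ReflTransGen adj (r (g v)) w → ReflTransGen adj w v → g w = g v :=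
    fun v w h1 h2 => le_antisymm (hg2 w (g v) h1) (hg2 v (g w) ((hg1 w).trans h2))
  have aux : ∀ v w, ReflTransGen adj (r (g v)) w → ReflTransGen adj w v →
      ReflTransGen (fun a b => g a = g v ∧ g b = g v ∧ adj a b) (r (g v)) w := by
    intro v w h1
    induction h1 with
    | refl => exact fun _ => ReflTransGen.refl
    | @tail b d h1 hbd ih =>
        intro h2
        exact (ih (ReflTransGen.head hbd h2)).tail
          ⟨geq v b h1 (ReflTransGen.head hbd h2), geq v d (h1.tail hbd) h2, hbd⟩
  set T : Finset (Fin k) := univ.image g with hT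
  have hmemT : ∀ v, g v ∈ T := fun v => mem_image_of_mem g (mem_univ v)
  refine ⟨T.card, le_trans (card_le_card (subset_univ T)) (by simp), fun v => T.equivFin ⟨g v, hmemT v⟩, ?_⟩
  intro t'
  set x := T.equivFin.symm t' with hx
  obtain ⟨v0, -, hv0⟩ := mem_image.mp x.2
  have h1 : ReflTransGen adj (r x.1) v0 := by rw [← hv0]; exact hg1 v0
  have hgr : g (r x.1) = x.1 := by
    refine le_antisymm (hg2 _ _ ReflTransGen.refl) ?_
    have h3 : g v0 ≤ g (r x.1) := hg2 v0 _ ((hg1 (r x.1)).trans h1)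
    rwa [hv0] at h3
  have key : ∀ a (ha : g a = x.1), T.equivFin ⟨g a, hmemT a⟩ = t' := by
    intro a ha
    have hax : (⟨g a, hmemT a⟩ : T) = x := Subtype.ext ha
    rw [hax, hx, Equiv.apply_symm_apply]
  refine ⟨r x.1, key _ hgr, ?_⟩
  intro v hv
  have hgv : g v = x.1 := by
    have h2 := congrArg T.equivFin.symm hv
    rw [Equiv.symm_apply_apply, ← hx] at h2
    exact congrArg Subtype.val h2
  have hpath := aux v v (hg1 v) ReflTransGen.refl
  rw [hgv] at hpath
  exact ReflTransGen.mono (fun a b hab => ⟨key a hab.1, key b hab.2.1, hab.2.2⟩) _ _ hpath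

/-- Any point of a finite preorder has a minimal point below it. -/
lemma exists_min_below {α : Type*} [Fintype α] (R : α → α → Prop)
    (htrans : ∀ {a b c}, R a b → R b c → R a c) (hrefl : ∀ a, R a a) (i : α) :
    ∃ j, R j i ∧ ∀ j', R j' j → R j j' := by
  classical
  obtain ⟨j, hj, hmin⟩ := (univ.filter fun j => R j i).exists_min_image
    (fun j => (univ.filter fun x => R x j).card)
    ⟨i, mem_filter.mpr ⟨mem_univ i, hrefl i⟩⟩
  have hji : R j i := (mem_filter.mp hj).2
  refine ⟨j, hji, fun j' hj' => ?_⟩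
  have hj'mem : j' ∈ univ.filter fun j => R j i := mem_filter.mpr ⟨mem_univ _, htrans hj' hji⟩
  have hsub : (univ.filter fun x => R x j') ⊆ univ.filter fun x => R x j :=
    fun x hx => mem_filter.mpr ⟨mem_univ x, htrans (mem_filter.mp hx).2 hj'⟩
  have heq := eq_of_subset_of_card_le hsub (hmin j' hj'mem)
  have hjj : j ∈ univ.filter fun x => R x j := mem_filter.mpr ⟨mem_univ j, hrefl j⟩
  rw [← heq] at hjj
  exact (mem_filter.mp hjj).2

end Aux

/-- Under the inter-cluster common influence assumption, `G` contains
cluster spanning trees w.r.t. the clustering `c` iff the minimum number `m` of directed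
trees in a directed spanning forest of `G` equals the minimum number `mq` for the
quotient graph. A directed spanning forest with `k` trees is encoded by an assignment
`f` of nodes to `k` classes such that each class is spanned by a directed rooted tree
using edges of the graph between nodes of that class. -/
theorem stmt11 (L N : ℕ) (adj : Fin L → Fin L → Prop)
    (c : Fin L → Fin N) (hc : Function.Surjective c)
    (qadj : Fin N → Fin N → Prop)
    (hq : ∀ j i, qadj j i ↔ ∃ k l, c k = j ∧ c l = i ∧ adj k l)
    (hci : ∀ j i, j ≠ i → qadj j i → ∀ v, c v = i → ∃ k, c k = j ∧ adj k v)
    (m mq : ℕ)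
    (hm : IsLeast {k : ℕ | ∃ f : Fin L → Fin k, ∀ t, ∃ r, f r = t ∧ ∀ v, f v = t →
        Relation.ReflTransGen (fun a b => f a = t ∧ f b = t ∧ adj a b) r v} m)
    (hmq : IsLeast {k : ℕ | ∃ f : Fin N → Fin k, ∀ t, ∃ r, f r = t ∧ ∀ v, f v = t →
        Relation.ReflTransGen (fun a b => f a = t ∧ f b = t ∧ qadj a b) r v} mq) :
    (∀ i, ∃ r, ∀ v, c v = i → Relation.ReflTransGen adj r v) ↔ m = mq := by
  classical
  -- projection of reachability to the quotient
  have proj : ∀ {u v : Fin L}, Relation.ReflTransGen adj u v →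
      Relation.ReflTransGen qadj (c u) (c v) := by
    intro u v h
    induction h with
    | refl => exact Relation.ReflTransGen.refl
    | @tail b d _ hbd ih =>
        by_cases hcd : c b = c d
        · rw [← hcd]; exact ih
        · exact ih.tail ((hq _ _).mpr ⟨b, d, rfl, rfl, hbd⟩)
  -- lifting of quotient reachability
  have lift : ∀ {j i : Fin N}, Relation.ReflTransGen qadj j i → ∀ v, c v = i →
      ∃ u, c u = j ∧ Relation.ReflTransGen adj u v := by
    intro j i h
    induction h with
    | refl => exact fun v hv => ⟨v, hv, Relation.ReflTransGen.refl⟩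
    | @tail p i' _ hpi ih =>
        intro v hv
        by_cases hppi : p = i'
        · exact ih v (by rw [hv, hppi])
        · obtain ⟨kk, hkk, hkv⟩ := hci p i' hppi hpi v hv
          obtain ⟨u, hu, huk⟩ := ih kk hkk
          exact ⟨u, hu, huk.tail hkv⟩
  obtain ⟨f, hf⟩ := hm.1
  obtain ⟨r, hr⟩ := enc_to_cover f hf
  obtain ⟨F, hF⟩ := hmq.1
  obtain ⟨ρ, hρ⟩ := enc_to_cover F hF
  -- minimality of mq over finite quotient covers
  have hminQ : ∀ S : Finset (Fin N), (∀ i, ∃ j ∈ S, Relation.ReflTransGen qadj j i) →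
      mq ≤ S.card := by
    intro S hS
    obtain ⟨k', hk', f', hf'⟩ := cover_to_enc (fun t : Fin S.card => (S.equivFin.symm t : Fin N))
      (fun i => by
        obtain ⟨j, hj, hji⟩ := hS i
        refine ⟨S.equivFin ⟨j, hj⟩, ?_⟩
        simpa using hji)
    exact (hmq.2 ⟨f', hf'⟩).trans hk'
  -- mq ≤ m always
  have hmqm : mq ≤ m := by
    obtain ⟨k', hk', f', hf'⟩ := cover_to_enc (fun t => c (r t)) (fun i => by
      obtain ⟨v, hv⟩ := hc i
      obtain ⟨t, ht⟩ := hr v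
      exact ⟨t, hv ▸ proj ht⟩)
    exact (hmq.2 ⟨f', hf'⟩).trans hk'
  constructor
  · -- cluster spanning trees → m = mq
    intro hcst
    refine le_antisymm ?_ hmqm
    choose s hs using hcst
    obtain ⟨k', hk', f', hf'⟩ := cover_to_enc (fun t : Fin mq => s (ρ t)) (fun v => by
      obtain ⟨t, ht⟩ := hρ (c v)
      obtain ⟨u, hu, huv⟩ := lift ht v rfl
      exact ⟨t, (hs (ρ t) u hu).trans huv⟩)
    exact (hm.2 ⟨f', hf'⟩).trans hk'
  · -- m = mq → cluster spanning trees
    intro hEq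
    subst hEq
    intro i
    choose w hw using fun i => hc i
    choose τ hτ using fun s0 : Fin m => hr (w (ρ s0))
    have hqτ : ∀ s, Relation.ReflTransGen qadj (c (r (τ s))) (ρ s) :=
      fun s => (hw (ρ s)) ▸ proj (hτ s)
    -- τ is injective, hence surjective
    have hτinj : Function.Injective τ := by
      by_contra hni
      have hlt : (univ.image τ).card < m := by
        have hle : (univ.image τ).card ≤ m := le_trans card_image_le (by simp)
        rcases lt_or_eq_of_le hle with h | h
        · exact h
        · exfalso
          apply hni
          have := card_image_iff.mp (by rw [h]; simp)
          intro a b hab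
          exact this (by simp) (by simp) hab
      have hcov : ∀ i', ∃ j ∈ (univ.image τ).image (fun t => c (r t)),
          Relation.ReflTransGen qadj j i' := by
        intro i'
        obtain ⟨s, hsi⟩ := hρ i'
        exact ⟨c (r (τ s)), mem_image_of_mem _ (mem_image_of_mem _ (mem_univ s)),
          (hqτ s).trans hsi⟩
      have h1 := hminQ _ hcov
      have h2 : ((univ.image τ).image (fun t => c (r t))).card ≤ (univ.image τ).card :=
        card_image_le
      omega
    have hτsurj : Function.Surjective τ := Finite.surjective_of_injective hτinj
    -- minimal quotient node j0 below i
    obtain ⟨j0, hj0i, hj0min⟩ := exists_min_below (fun a b => Relation.ReflTransGen qadj a b)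
      (fun h1 h2 => h1.trans h2) (fun a => Relation.ReflTransGen.refl) i
    obtain ⟨t0, ht0⟩ := hr (w j0)
    have hct0 : Relation.ReflTransGen qadj (c (r t0)) j0 := (hw j0) ▸ proj ht0
    -- only one root's cluster reaches j0 in the quotient
    have single : ∀ t1, Relation.ReflTransGen qadj (c (r t1)) j0 → t1 = t0 := by
      intro t1 h1
      by_contra hne
      obtain ⟨s1, hs1⟩ := hτsurj t1
      obtain ⟨s0, hs0⟩ := hτsurj t0
      have hsne : s1 ≠ s0 := fun h => hne (by rw [← hs1, h, hs0])
      set P : Fin m → Prop := fun s => Relation.ReflTransGen qadj j0 (c (r (τ s))) with hP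
      have hs1P : P s1 := by rw [hP]; simp only []; rw [hs1]; exact hj0min _ h1
      have hs0P : P s0 := by rw [hP]; simp only []; rw [hs0]; exact hj0min _ hct0
      have hcov : ∀ i', ∃ j ∈ insert j0 ((univ.filter fun s => ¬ P s).image ρ),
          Relation.ReflTransGen qadj j i' := by
        intro i'
        obtain ⟨s, hsi⟩ := hρ i'
        by_cases hPs : P s
        · exact ⟨j0, mem_insert_self _ _, (hPs.trans (hqτ s)).trans hsi⟩
        · exact ⟨ρ s, mem_insert_of_mem (mem_image_of_mem _
            (mem_filter.mpr ⟨mem_univ _, hPs⟩)), hsi⟩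
      have hSm := hminQ _ hcov
      have h2le : 1 < (univ.filter P).card :=
        one_lt_card.mpr ⟨s1, mem_filter.mpr ⟨mem_univ _, hs1P⟩,
          s0, mem_filter.mpr ⟨mem_univ _, hs0P⟩, hsne⟩
      have hsplit : (univ.filter P).card + (univ.filter fun s => ¬ P s).card = m := by
        rw [card_filter_add_card_filter_not]; simp
      have hScard : (insert j0 ((univ.filter fun s => ¬ P s).image ρ)).card ≤
          ((univ.filter fun s => ¬ P s).image ρ).card + 1 := card_insert_le _ _
      have hScard2 : ((univ.filter fun s => ¬ P s).image ρ).card ≤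
          (univ.filter fun s => ¬ P s).card := card_image_le
      omega
    -- r t0 reaches every node of cluster j0
    have hall : ∀ v, c v = j0 → Relation.ReflTransGen adj (r t0) v := by
      intro v hv
      obtain ⟨t1, ht1⟩ := hr v
      have ht10 := single t1 (hv ▸ proj ht1)
      rwa [← ht10]
    refine ⟨r t0, fun v hv => ?_⟩
    obtain ⟨u, hu, huv⟩ := lift hj0i v hv
    exact (hall u hu).trans huv
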